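/- Let 0 < r_1 < r_2 < ∞, and suppose m, S ∈ C¹([r_1, r_2)), with S > 0, and ω_j ∈ C²([r_1, r_2)) for j = 1, …, N−1 satisfy the su(N) EYM field equations on [r_1, r_2). Suppose there is a constant μ_min > 0 such that μ(r) = 1 − 2m(r)/r − Λr²/3 ≥ μ_min for all r ∈ [r_1, r_2). Then all field variables remain regular up to r_2: each of the functions m, S, ω_1, …, ω_{N−1} and ω_1′, …, ω_{N−1}′ is bounded on [r_1, r_2) and has a finite limit as r → r_2⁻ (with lim S > 0). -/

import Mathlib

open Filter Asymptotics Topology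

noncomputable section

/-- μ(r) = 1 − 2m(r)/r − Λr²/3. -/
def muF (Λ : ℝ) (m : ℝ → ℝ) (r : ℝ) : ℝ := 1 - 2 * m r / r - Λ * r ^ 2 / 3

/-- G = Σ_{j=1}^{N−1} (ω_j′)². -/
def GF (N : ℕ) (ω : ℕ → ℝ → ℝ) (r : ℝ) : ℝ :=
  ∑ j ∈ Finset.Icc 1 (N - 1), deriv (ω j) r ^ 2

/-- p_θ evaluated on a set of gauge-field values `w`. -/
def pThetaVal (N : ℕ) (w : ℕ → ℝ) (r : ℝ) : ℝ :=
  1 / (4 * r ^ 4) *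
    ∑ j ∈ Finset.Icc 1 N, (w j ^ 2 - w (j - 1) ^ 2 - (N : ℝ) - 1 + 2 * (j : ℝ)) ^ 2

/-- p_θ = (1/4r⁴) Σ_{j=1}^{N} (ω_j² − ω_{j−1}² − N − 1 + 2j)². -/
def pTheta (N : ℕ) (ω : ℕ → ℝ → ℝ) (r : ℝ) : ℝ := pThetaVal N (fun j => ω j r) r

/-- W_j evaluated on gauge-field values `w`. -/
def WVal (w : ℕ → ℝ) (j : ℕ) : ℝ :=
  1 - w j ^ 2 + 1 / 2 * (w (j - 1) ^ 2 + w (j + 1) ^ 2)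

/-- W_j = 1 − ω_j² + (1/2)(ω_{j−1}² + ω_{j+1}²). -/
def WF (ω : ℕ → ℝ → ℝ) (j : ℕ) (r : ℝ) : ℝ := WVal (fun i => ω i r) j

/-- The static spherically symmetric su(N) EYM field equations at radius `r`:
m′ = μG + r²p_θ, S′ = S·(2G/r), and the N−1 Yang–Mills equations
r²μω_j″ + (2m − 2r³p_θ − (2Λ/3)r³)ω_j′ + W_jω_j = 0, with ω₀ ≡ 0, ω_N ≡ 0. -/
def EYM (N : ℕ) (Λ : ℝ) (m S : ℝ → ℝ) (ω : ℕ → ℝ → ℝ) (r : ℝ) : Prop :=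
  ω 0 r = 0 ∧ ω N r = 0 ∧
  HasDerivAt m (muF Λ m r * GF N ω r + r ^ 2 * pTheta N ω r) r ∧
  HasDerivAt S (S r * (2 * GF N ω r / r)) r ∧
  ∀ j ∈ Finset.Icc 1 (N - 1),
    DifferentiableAt ℝ (ω j) r ∧ DifferentiableAt ℝ (deriv (ω j)) r ∧
    r ^ 2 * muF Λ m r * deriv (deriv (ω j)) r
      + (2 * m r - 2 * r ^ 3 * pTheta N ω r - 2 * Λ * r ^ 3 / 3) * deriv (ω j) r
      + WF ω j r * ω j r = 0

/-- Boundary conditions at infinity: m → M, S → 1, ω_j → ω_{j,∞} as r → ∞. -/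
def BCInfinity (N : ℕ) (m S : ℝ → ℝ) (ω : ℕ → ℝ → ℝ) : Prop :=
  (∃ M : ℝ, Tendsto m atTop (𝓝 M)) ∧ Tendsto S atTop (𝓝 1) ∧
  ∀ j ∈ Finset.Icc 1 (N - 1), ∃ w : ℝ, Tendsto (ω j) atTop (𝓝 w)

/-- `f` has exactly `k` zeros in the set `s`. -/
def HasExactlyZeros (f : ℝ → ℝ) (s : Set ℝ) (k : ℕ) : Prop :=
  {r ∈ s | f r = 0}.Finite ∧ {r ∈ s | f r = 0}.ncard = k

lemma myMonoOnIco {r₁ r₂ : ℝ} {f g : ℝ → ℝ}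
    (hf : ∀ r ∈ Set.Ico r₁ r₂, HasDerivAt f (g r) r)
    (hg : ∀ r ∈ Set.Ico r₁ r₂, 0 ≤ g r) : MonotoneOn f (Set.Ico r₁ r₂) := by
  apply monotoneOn_of_deriv_nonneg (convex_Ico _ _)
  · intro x hx; exact (hf x hx).differentiableAt.continuousAt.continuousWithinAt
  · intro x hx
    rw [interior_Ico] at hx
    exact (hf x (Set.Ioo_subset_Ico_self hx)).differentiableAt.differentiableWithinAt
  · intro x hx
    rw [interior_Ico] at hx
    rw [(hf x (Set.Ioo_subset_Ico_self hx)).deriv]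
    exact hg x (Set.Ioo_subset_Ico_self hx)

lemma myAntiOnIco {r₁ r₂ : ℝ} {f g : ℝ → ℝ}
    (hf : ∀ r ∈ Set.Ico r₁ r₂, HasDerivAt f (g r) r)
    (hg : ∀ r ∈ Set.Ico r₁ r₂, g r ≤ 0) : AntitoneOn f (Set.Ico r₁ r₂) := by
  have : MonotoneOn (fun x => -f x) (Set.Ico r₁ r₂) :=
    myMonoOnIco (fun r hr => (hf r hr).neg) (fun r hr => neg_nonneg.2 (hg r hr))
  intro a ha b hb hab
  have := this ha hb hab
  simpa using this

lemma myTendstoMono {r₁ r₂ : ℝ} (h12 : r₁ < r₂) {f : ℝ → ℝ} {C : ℝ}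
    (hf : MonotoneOn f (Set.Ico r₁ r₂)) (hC : ∀ r ∈ Set.Ico r₁ r₂, f r ≤ C) :
    ∃ L, Tendsto f (𝓝[<] r₂) (𝓝 L) := by
  have hmem : ∀ r ∈ Set.Iio r₂, max r r₁ ∈ Set.Ico r₁ r₂ := fun r hr =>
    ⟨le_max_right _ _, max_lt hr h12⟩
  have hmono : MonotoneOn (fun r => f (max r r₁)) (Set.Iio r₂) := fun a ha b hb hab =>
    hf (hmem a ha) (hmem b hb) (max_le_max hab le_rfl)
  have hbdd : BddAbove ((fun r => f (max r r₁)) '' Set.Iio r₂) :=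
    ⟨C, by rintro _ ⟨r, hr, rfl⟩; exact hC _ (hmem r hr)⟩
  refine ⟨_, (hmono.tendsto_nhdsLT hbdd).congr' ?_⟩
  filter_upwards [Ioo_mem_nhdsLT h12] with r hr
  rw [max_eq_left hr.1.le]

lemma myTendstoAnti {r₁ r₂ : ℝ} (h12 : r₁ < r₂) {f : ℝ → ℝ} {C : ℝ}
    (hf : AntitoneOn f (Set.Ico r₁ r₂)) (hC : ∀ r ∈ Set.Ico r₁ r₂, C ≤ f r) :
    ∃ L, Tendsto f (𝓝[<] r₂) (𝓝 L) := by
  obtain ⟨L, hL⟩ := myTendstoMono h12 (f := fun x => -f x)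
    (fun a ha b hb hab => neg_le_neg (hf ha hb hab))
    (fun r hr => neg_le_neg (hC r hr))
  exact ⟨-L, by simpa using hL.neg⟩

set_option maxHeartbeats 1600000 in
/-- **Regularity as long as μ > 0.** If m, S ∈ C¹([r₁,r₂)) with S > 0, ω_j ∈ C²([r₁,r₂))
satisfy the su(N) EYM equations on [r₁,r₂), and μ ≥ μ_min > 0 there, then all field
variables (m, S, ω_j, ω_j′) are bounded on [r₁,r₂) and have finite limits as r → r₂⁻,
with lim S > 0. -/
theorem regular_while_mu_positive (N : ℕ) (hN : 2 ≤ N) (Λ : ℝ) (hΛ : Λ < 0)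
    (r₁ r₂ : ℝ) (hr₁ : 0 < r₁) (hr₁₂ : r₁ < r₂)
    (m S : ℝ → ℝ) (ω : ℕ → ℝ → ℝ)
    (hm : ContDiffOn ℝ 1 m (Set.Ico r₁ r₂))
    (hS : ContDiffOn ℝ 1 S (Set.Ico r₁ r₂))
    (hSpos : ∀ r ∈ Set.Ico r₁ r₂, 0 < S r)
    (hω : ∀ j ∈ Finset.Icc 1 (N - 1), ContDiffOn ℝ 2 (ω j) (Set.Ico r₁ r₂))
    (hsol : ∀ r ∈ Set.Ico r₁ r₂, EYM N Λ m S ω r)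
    (μmin : ℝ) (hμmin : 0 < μmin)
    (hμ : ∀ r ∈ Set.Ico r₁ r₂, μmin ≤ muF Λ m r) :
    Bornology.IsBounded (m '' Set.Ico r₁ r₂) ∧
    Bornology.IsBounded (S '' Set.Ico r₁ r₂) ∧
    (∀ j ∈ Finset.Icc 1 (N - 1),
      Bornology.IsBounded (ω j '' Set.Ico r₁ r₂) ∧
      Bornology.IsBounded (deriv (ω j) '' Set.Ico r₁ r₂)) ∧
    (∃ m₂ : ℝ, Tendsto m (𝓝[<] r₂) (𝓝 m₂)) ∧
    (∃ S₂ : ℝ, 0 < S₂ ∧ Tendsto S (𝓝[<] r₂) (𝓝 S₂)) ∧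
    (∀ j ∈ Finset.Icc 1 (N - 1),
      (∃ a : ℝ, Tendsto (ω j) (𝓝[<] r₂) (𝓝 a)) ∧
      (∃ b : ℝ, Tendsto (deriv (ω j)) (𝓝[<] r₂) (𝓝 b))) := by
  have h1mem : 1 ∈ Finset.Icc 1 (N - 1) := Finset.mem_Icc.2 ⟨le_refl 1, by omega⟩
  have hne : (Finset.Icc 1 (N - 1)).Nonempty := ⟨1, h1mem⟩
  have hr₁I : r₁ ∈ Set.Ico r₁ r₂ := ⟨le_refl _, hr₁₂⟩
  have hr₂0 : 0 < r₂ := hr₁.trans hr₁₂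
  have hrpos : ∀ r ∈ Set.Ico r₁ r₂, 0 < r := fun r hr => lt_of_lt_of_le hr₁ hr.1
  have hm' : ∀ r ∈ Set.Ico r₁ r₂,
      HasDerivAt m (muF Λ m r * GF N ω r + r ^ 2 * pTheta N ω r) r :=
    fun r hr => (hsol r hr).2.2.1
  have hS' : ∀ r ∈ Set.Ico r₁ r₂, HasDerivAt S (S r * (2 * GF N ω r / r)) r :=
    fun r hr => (hsol r hr).2.2.2.1
  have hym : ∀ r ∈ Set.Ico r₁ r₂, ∀ j ∈ Finset.Icc 1 (N - 1),
      DifferentiableAt ℝ (ω j) r ∧ DifferentiableAt ℝ (deriv (ω j)) r ∧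
      r ^ 2 * muF Λ m r * deriv (deriv (ω j)) r
        + (2 * m r - 2 * r ^ 3 * pTheta N ω r - 2 * Λ * r ^ 3 / 3) * deriv (ω j) r
        + WF ω j r * ω j r = 0 := fun r hr => (hsol r hr).2.2.2.2
  have hG0 : ∀ r : ℝ, 0 ≤ GF N ω r := fun r => Finset.sum_nonneg fun j _ => sq_nonneg _
  have hp0 : ∀ r ∈ Set.Ico r₁ r₂, 0 ≤ pTheta N ω r := by
    intro r hr
    unfold pTheta pThetaVal
    have hsum : 0 ≤ ∑ j ∈ Finset.Icc 1 N,
        ((fun j => ω j r) j ^ 2 - (fun j => ω j r) (j - 1) ^ 2 - (N : ℝ) - 1 + 2 * (j : ℝ)) ^ 2 :=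
      Finset.sum_nonneg fun j _ => sq_nonneg _
    have h4 : (0:ℝ) ≤ 1 / (4 * r ^ 4) := by positivity
    exact mul_nonneg h4 hsum
  have hGj : ∀ j ∈ Finset.Icc 1 (N - 1), ∀ r : ℝ, deriv (ω j) r ^ 2 ≤ GF N ω r :=
    fun j hj r => by
      unfold GF; exact Finset.single_le_sum (f := fun i => deriv (ω i) r ^ 2) (fun i _ => sq_nonneg _) hj
  have hm'0 : ∀ r ∈ Set.Ico r₁ r₂, 0 ≤ muF Λ m r * GF N ω r + r ^ 2 * pTheta N ω r :=
    fun r hr => add_nonneg (mul_nonneg (hμmin.le.trans (hμ r hr)) (hG0 r))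
      (mul_nonneg (sq_nonneg r) (hp0 r hr))
  have hmmono : MonotoneOn m (Set.Ico r₁ r₂) := myMonoOnIco hm' hm'0
  -- upper bound on m from μ ≥ μmin
  obtain ⟨Cm, hCmdef⟩ : ∃ x : ℝ, x = r₂ * |1 - μmin| / 2 + |Λ| * r₂ ^ 3 / 6 := ⟨_, rfl⟩
  have hmub : ∀ r ∈ Set.Ico r₁ r₂, m r ≤ Cm := by
    intro r hr
    have h1 := hμ r hr
    rw [muF] at h1
    have hr0 : 0 < r := hrpos r hr
    have h2 : 2 * m r / r ≤ 1 - μmin - Λ * r ^ 2 / 3 := by linarith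
    have h3 : 2 * m r ≤ (1 - μmin - Λ * r ^ 2 / 3) * r := (div_le_iff₀ hr0).mp h2
    have h4 : (1 - μmin) * r ≤ |1 - μmin| * r₂ := by
      have := le_abs_self (1 - μmin)
      nlinarith [abs_nonneg (1 - μmin), hr.2, hr0]
    have h5 : -Λ * r ^ 3 ≤ |Λ| * r₂ ^ 3 := by
      rw [abs_of_neg hΛ]
      exact mul_le_mul_of_nonneg_left (pow_le_pow_left₀ hr0.le hr.2.le 3) (neg_nonneg.2 hΛ.le)
    rw [hCmdef]; nlinarith
  have hmlb : ∀ r ∈ Set.Ico r₁ r₂, m r₁ ≤ m r := fun r hr => hmmono hr₁I hr hr.1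
  obtain ⟨Ma, hMadef⟩ : ∃ x : ℝ, x = max |Cm| |m r₁| := ⟨_, rfl⟩
  have hMa0 : 0 ≤ Ma := by rw [hMadef]; exact le_trans (abs_nonneg _) (le_max_right _ _)
  have hmabs : ∀ r ∈ Set.Ico r₁ r₂, |m r| ≤ Ma := by
    intro r hr
    rw [abs_le]
    constructor
    · have h1 := hmlb r hr
      have h2 : -|m r₁| ≤ m r₁ := neg_abs_le _
      have h3 : |m r₁| ≤ Ma := by rw [hMadef]; exact le_max_right _ _
      linarith
    · refine (hmub r hr).trans ((le_abs_self Cm).trans ?_)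
      rw [hMadef]; exact le_max_left _ _
  obtain ⟨m₂, hm₂⟩ : ∃ m₂, Tendsto m (𝓝[<] r₂) (𝓝 m₂) := myTendstoMono hr₁₂ hmmono hmub
  -- pointwise bound |ω_j'| ≤ m' + 1/(4 μmin)
  have hkey : ∀ x : ℝ, x ≤ μmin * x ^ 2 + 1 / (4 * μmin) := by
    intro x
    rw [← sub_nonneg]
    have h : μmin * x ^ 2 + 1 / (4 * μmin) - x = (2 * μmin * x - 1) ^ 2 / (4 * μmin) := by
      field_simp
      ring
    rw [h]
    positivity
  have habs : ∀ j ∈ Finset.Icc 1 (N - 1), ∀ r ∈ Set.Ico r₁ r₂,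
      |deriv (ω j) r| ≤ (muF Λ m r * GF N ω r + r ^ 2 * pTheta N ω r) + 1 / (4 * μmin) := by
    intro j hj r hr
    have h1 := hkey |deriv (ω j) r|
    rw [sq_abs] at h1
    have h2 : μmin * deriv (ω j) r ^ 2 ≤ muF Λ m r * GF N ω r :=
      calc μmin * deriv (ω j) r ^ 2 ≤ μmin * GF N ω r :=
            mul_le_mul_of_nonneg_left (hGj j hj r) hμmin.le
        _ ≤ muF Λ m r * GF N ω r := mul_le_mul_of_nonneg_right (hμ r hr) (hG0 r)
    have h3 := mul_nonneg (sq_nonneg r) (hp0 r hr)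
    linarith
  -- the two comparison functions
  have hψp : ∀ j ∈ Finset.Icc 1 (N - 1), AntitoneOn
      (fun r => ω j r - m r - r / (4 * μmin)) (Set.Ico r₁ r₂) := by
    intro j hj
    apply myAntiOnIco (g := fun r =>
      deriv (ω j) r - (muF Λ m r * GF N ω r + r ^ 2 * pTheta N ω r) - 1 / (4 * μmin))
    · intro r hr
      exact (((hym r hr j hj).1.hasDerivAt).sub (hm' r hr)).sub
        ((hasDerivAt_id r).div_const (4 * μmin))
    · intro r hr
      have := (le_abs_self (deriv (ω j) r)).trans (habs j hj r hr)
      linarith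
  have hψm : ∀ j ∈ Finset.Icc 1 (N - 1), AntitoneOn
      (fun r => -ω j r - m r - r / (4 * μmin)) (Set.Ico r₁ r₂) := by
    intro j hj
    apply myAntiOnIco (g := fun r =>
      -deriv (ω j) r - (muF Λ m r * GF N ω r + r ^ 2 * pTheta N ω r) - 1 / (4 * μmin))
    · intro r hr
      exact (((hym r hr j hj).1.hasDerivAt).neg.sub (hm' r hr)).sub
        ((hasDerivAt_id r).div_const (4 * μmin))
    · intro r hr
      have h2 := (neg_abs_le (deriv (ω j) r)).trans (le_abs_self (deriv (ω j) r))
      have h3 := (neg_abs_le (deriv (ω j) r))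
      have h4 := habs j hj r hr
      linarith
  obtain ⟨Q, hQdef⟩ : ∃ x : ℝ, x = (Cm - m r₁) + (r₂ - r₁) / (4 * μmin) := ⟨_, rfl⟩
  have hQ0 : 0 ≤ Q := by
    have h1 := hmub r₁ hr₁I
    have : 0 ≤ (r₂ - r₁) / (4 * μmin) := div_nonneg (by linarith) (by linarith)
    rw [hQdef]; linarith
  have hωosc : ∀ j ∈ Finset.Icc 1 (N - 1), ∀ r ∈ Set.Ico r₁ r₂, |ω j r| ≤ |ω j r₁| + Q := by
    intro j hj r hr
    have h1 := hψp j hj hr₁I hr hr.1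
    have h2 := hψm j hj hr₁I hr hr.1
    simp only at h1 h2
    have h3 : m r ≤ Cm := hmub r hr
    have h4 : (r - r₁) / (4 * μmin) ≤ (r₂ - r₁) / (4 * μmin) := by
      gcongr
      exact hr.2.le
    have h7 := hmlb r hr
    rw [abs_le]
    have h5 := neg_abs_le (ω j r₁)
    have h6 := le_abs_self (ω j r₁)
    rw [hQdef]
    simp only [sub_div] at h4
    simp only [sub_div]
    constructor
    · linarith
    · linarith
  obtain ⟨B, hBdef⟩ : ∃ x : ℝ, x = (Finset.Icc 1 (N - 1)).sup' hne (fun j => |ω j r₁|) + Q := ⟨_, rfl⟩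
  have hB : ∀ j ∈ Finset.Icc 1 (N - 1), ∀ r ∈ Set.Ico r₁ r₂, |ω j r| ≤ B := by
    intro j hj r hr
    have h1 := hωosc j hj r hr
    have h2 : |ω j r₁| ≤ (Finset.Icc 1 (N - 1)).sup' hne (fun j => |ω j r₁|) :=
      Finset.le_sup' (fun j => |ω j r₁|) hj
    rw [hBdef]; linarith
  obtain ⟨B', hB'def⟩ : ∃ x : ℝ, x = max B 0 := ⟨_, rfl⟩
  have hB'0 : 0 ≤ B' := by rw [hB'def]; exact le_max_right _ _
  have hB' : ∀ i, i ≤ N → ∀ r ∈ Set.Ico r₁ r₂, |ω i r| ≤ B' := by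
    intro i hiN r hr
    rcases eq_or_ne i 0 with h0 | h0
    · subst h0; rw [(hsol r hr).1]; simpa using hB'0
    rcases eq_or_ne i N with hNi | hNi
    · subst hNi; rw [(hsol r hr).2.1]; simpa using hB'0
    · have hmem : i ∈ Finset.Icc 1 (N - 1) :=
        Finset.mem_Icc.2 ⟨Nat.one_le_iff_ne_zero.2 h0, by omega⟩
      rw [hB'def]; exact (hB i hmem r hr).trans (le_max_left _ _)
  have hsqle : ∀ x C : ℝ, |x| ≤ C → x ^ 2 ≤ C ^ 2 := by
    intro x C hx
    nlinarith [abs_nonneg x, sq_abs x]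
  -- limits of ω j
  have hωlim : ∀ j ∈ Finset.Icc 1 (N - 1), ∃ a : ℝ, Tendsto (ω j) (𝓝[<] r₂) (𝓝 a) := by
    intro j hj
    obtain ⟨L, hL⟩ : ∃ L, Tendsto (fun r => ω j r - m r - r / (4 * μmin)) (𝓝[<] r₂) (𝓝 L) := by
      apply myTendstoAnti hr₁₂ (hψp j hj) (C := -B - Ma - r₂ / (4 * μmin))
      intro r hr
      have h1 : -B ≤ ω j r := by
        have := hB j hj r hr; rw [abs_le] at this; linarith [this.1]
      have h2 : m r ≤ Ma := by
        have := hmabs r hr; rw [abs_le] at this; exact this.2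
      have h3 : r / (4 * μmin) ≤ r₂ / (4 * μmin) := by gcongr; exact hr.2.le
      linarith
    have hrlim : Tendsto (fun r : ℝ => r / (4 * μmin)) (𝓝[<] r₂) (𝓝 (r₂ / (4 * μmin))) :=
      (tendsto_id.div_const _).mono_left nhdsWithin_le_nhds
    refine ⟨L + m₂ + r₂ / (4 * μmin), ?_⟩
    have := (hL.add hm₂).add hrlim
    apply this.congr
    intro r
    ring
  -- bound on pTheta
  obtain ⟨T, hTdef⟩ : ∃ x : ℝ, x = 2 * B' ^ 2 + 3 * (N : ℝ) + 1 := ⟨_, rfl⟩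
  have hT0 : 0 ≤ T := by rw [hTdef]; positivity
  obtain ⟨Cp, hCpdef⟩ : ∃ x : ℝ, x = (N : ℝ) * T ^ 2 / (4 * r₁ ^ 4) := ⟨_, rfl⟩
  have hpbd : ∀ r ∈ Set.Ico r₁ r₂, pTheta N ω r ≤ Cp := by
    intro r hr
    have hr0 := hrpos r hr
    simp only [pTheta, pThetaVal]
    have hterm : ∀ j ∈ Finset.Icc 1 N,
        (ω j r ^ 2 - ω (j - 1) r ^ 2 - (N : ℝ) - 1 + 2 * (j : ℝ)) ^ 2
          ≤ T ^ 2 := by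
      intro j hjm
      rw [Finset.mem_Icc] at hjm
      have ha : ω j r ^ 2 ≤ B' ^ 2 := hsqle _ _ (hB' j hjm.2 r hr)
      have hb : ω (j - 1) r ^ 2 ≤ B' ^ 2 := hsqle _ _ (hB' (j - 1) (by omega) r hr)
      have hj1 : (1 : ℝ) ≤ (j : ℝ) := by exact_mod_cast hjm.1
      have hjN : (j : ℝ) ≤ (N : ℝ) := by exact_mod_cast hjm.2
      apply sq_le_sq'
      · simp only [hTdef]
        nlinarith [sq_nonneg (ω j r), sq_nonneg (ω (j - 1) r)]
      · simp only [hTdef]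
        nlinarith [sq_nonneg (ω j r), sq_nonneg (ω (j - 1) r)]
    have hsum : ∑ j ∈ Finset.Icc 1 N,
        (ω j r ^ 2 - ω (j - 1) r ^ 2 - (N : ℝ) - 1 + 2 * (j : ℝ)) ^ 2
          ≤ (N : ℝ) * T ^ 2 := by
      calc ∑ j ∈ Finset.Icc 1 N, (ω j r ^ 2 - ω (j - 1) r ^ 2 - (N : ℝ) - 1 + 2 * (j : ℝ)) ^ 2
          ≤ ∑ _j ∈ Finset.Icc 1 N, T ^ 2 := Finset.sum_le_sum hterm
        _ = ((Finset.Icc 1 N).card : ℝ) * T ^ 2 := by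
            rw [Finset.sum_const, nsmul_eq_mul]
        _ = (N : ℝ) * T ^ 2 := by
            rw [Nat.card_Icc]
            norm_num
    have hsum0 : 0 ≤ ∑ j ∈ Finset.Icc 1 N,
        (ω j r ^ 2 - ω (j - 1) r ^ 2 - (N : ℝ) - 1 + 2 * (j : ℝ)) ^ 2 :=
      Finset.sum_nonneg fun _ _ => sq_nonneg _
    have hfrac : 1 / (4 * r ^ 4) ≤ 1 / (4 * r₁ ^ 4) := by
      apply one_div_le_one_div_of_le (by positivity)
      have : r₁ ^ 4 ≤ r ^ 4 := pow_le_pow_left₀ hr₁.le hr.1 4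
      linarith
    rw [hCpdef]
    calc 1 / (4 * r ^ 4) * ∑ j ∈ Finset.Icc 1 N,
        (ω j r ^ 2 - ω (j - 1) r ^ 2 - (N : ℝ) - 1 + 2 * (j : ℝ)) ^ 2
        ≤ 1 / (4 * r₁ ^ 4) * ∑ j ∈ Finset.Icc 1 N,
        (ω j r ^ 2 - ω (j - 1) r ^ 2 - (N : ℝ) - 1 + 2 * (j : ℝ)) ^ 2 :=
          mul_le_mul_of_nonneg_right hfrac hsum0
      _ ≤ 1 / (4 * r₁ ^ 4) * ((N : ℝ) * T ^ 2) :=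
          mul_le_mul_of_nonneg_left hsum (by positivity)
      _ = (N : ℝ) * T ^ 2 / (4 * r₁ ^ 4) := by ring
  have hCp0 : 0 ≤ Cp := le_trans (hp0 r₁ hr₁I) (hpbd r₁ hr₁I)
  -- bound on the coefficient A
  obtain ⟨CA, hCAdef⟩ : ∃ x : ℝ, x = 2 * Ma + 2 * r₂ ^ 3 * Cp + 2 * |Λ| * r₂ ^ 3 / 3 := ⟨_, rfl⟩
  have hCA0 : 0 ≤ CA := by
    rw [hCAdef]
    have : 0 ≤ |Λ| := abs_nonneg _
    nlinarith [pow_pos hr₂0 3]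
  have hAbd : ∀ r ∈ Set.Ico r₁ r₂,
      |2 * m r - 2 * r ^ 3 * pTheta N ω r - 2 * Λ * r ^ 3 / 3| ≤ CA := by
    intro r hr
    have hr0 := hrpos r hr
    have h1 := hmabs r hr
    rw [abs_le] at h1
    have h2 := hp0 r hr
    have h3 := hpbd r hr
    have h4 : r ^ 3 ≤ r₂ ^ 3 := pow_le_pow_left₀ hr0.le hr.2.le 3
    have h5 : 0 < r ^ 3 := pow_pos hr0 3
    have h6 : r ^ 3 * pTheta N ω r ≤ r₂ ^ 3 * Cp :=
      mul_le_mul h4 h3 h2 (by positivity)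
    have h7 : 0 ≤ r ^ 3 * pTheta N ω r := mul_nonneg h5.le h2
    have h8 : -Λ * r ^ 3 ≤ |Λ| * r₂ ^ 3 := by
      rw [abs_of_neg hΛ]
      exact mul_le_mul_of_nonneg_left h4 (neg_nonneg.2 hΛ.le)
    have h9 : 0 ≤ -Λ * r ^ 3 := mul_nonneg (neg_nonneg.2 hΛ.le) h5.le
    rw [abs_le, hCAdef]
    constructor
    · nlinarith
    · nlinarith
  -- bound on W
  obtain ⟨CW, hCWdef⟩ : ∃ x : ℝ, x = 1 + 2 * B' ^ 2 := ⟨_, rfl⟩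
  have hCW0 : 0 ≤ CW := by rw [hCWdef]; positivity
  have hWbd : ∀ j ∈ Finset.Icc 1 (N - 1), ∀ r ∈ Set.Ico r₁ r₂, |WF ω j r| ≤ CW := by
    intro j hj r hr
    rw [Finset.mem_Icc] at hj
    unfold WF WVal
    have ha : ω j r ^ 2 ≤ B' ^ 2 := hsqle _ _ (hB' j (by omega) r hr)
    have hb : ω (j - 1) r ^ 2 ≤ B' ^ 2 := hsqle _ _ (hB' (j - 1) (by omega) r hr)
    have hc : ω (j + 1) r ^ 2 ≤ B' ^ 2 := hsqle _ _ (hB' (j + 1) (by omega) r hr)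
    rw [abs_le, hCWdef]
    constructor
    · simp only
      nlinarith [sq_nonneg (ω (j - 1) r), sq_nonneg (ω (j + 1) r)]
    · simp only
      nlinarith [sq_nonneg (ω j r)]
  -- bound on ω'' in terms of ω'
  have hc : (0:ℝ) < r₁ ^ 2 * μmin := by positivity
  obtain ⟨K, hKdef⟩ : ∃ x : ℝ, x = (CA + 1) / (r₁ ^ 2 * μmin) := ⟨_, rfl⟩
  obtain ⟨ε, hεdef⟩ : ∃ x : ℝ, x = CW * B' / (r₁ ^ 2 * μmin) := ⟨_, rfl⟩
  have hK0 : 0 < K := by rw [hKdef]; exact div_pos (by linarith) hc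
  have hε0 : 0 ≤ ε := by rw [hεdef]; exact div_nonneg (mul_nonneg hCW0 hB'0) hc.le
  have hderiv2 : ∀ j ∈ Finset.Icc 1 (N - 1), ∀ r ∈ Set.Ico r₁ r₂,
      |deriv (deriv (ω j)) r| ≤ K * |deriv (ω j) r| + ε := by
    intro j hj r hr
    obtain ⟨hd1, hd2, heq⟩ := hym r hr j hj
    have hr0 := hrpos r hr
    have hμr := hμ r hr
    have hrμpos : 0 < r ^ 2 * muF Λ m r :=
      mul_pos (pow_pos hr0 2) (lt_of_lt_of_le hμmin hμr)
    have hrμ : r₁ ^ 2 * μmin ≤ r ^ 2 * muF Λ m r :=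
      mul_le_mul (pow_le_pow_left₀ hr₁.le hr.1 2) hμr hμmin.le (sq_nonneg r)
    have hW := hWbd j hj r hr
    have hjN : j ≤ N := by rw [Finset.mem_Icc] at hj; omega
    have hωb := hB' j hjN r hr
    have hA := hAbd r hr
    have heq2 : r ^ 2 * muF Λ m r * deriv (deriv (ω j)) r
        = -((2 * m r - 2 * r ^ 3 * pTheta N ω r - 2 * Λ * r ^ 3 / 3) * deriv (ω j) r
            + WF ω j r * ω j r) := by linarith
    have habs2 : (r ^ 2 * muF Λ m r) * |deriv (deriv (ω j)) r|
        ≤ CA * |deriv (ω j) r| + CW * B' := by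
      have hrw : (r ^ 2 * muF Λ m r) * |deriv (deriv (ω j)) r|
          = |(2 * m r - 2 * r ^ 3 * pTheta N ω r - 2 * Λ * r ^ 3 / 3) * deriv (ω j) r
            + WF ω j r * ω j r| := by
        rw [← abs_of_pos hrμpos, ← abs_mul, heq2, abs_neg]
      rw [hrw]
      calc |(2 * m r - 2 * r ^ 3 * pTheta N ω r - 2 * Λ * r ^ 3 / 3) * deriv (ω j) r
            + WF ω j r * ω j r|
          ≤ |(2 * m r - 2 * r ^ 3 * pTheta N ω r - 2 * Λ * r ^ 3 / 3) * deriv (ω j) r|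
            + |WF ω j r * ω j r| := abs_add_le _ _
        _ = |2 * m r - 2 * r ^ 3 * pTheta N ω r - 2 * Λ * r ^ 3 / 3| * |deriv (ω j) r|
            + |WF ω j r| * |ω j r| := by rw [abs_mul, abs_mul]
        _ ≤ CA * |deriv (ω j) r| + CW * B' := by
            have h1 := mul_le_mul_of_nonneg_right hA (abs_nonneg (deriv (ω j) r))
            have h2 := mul_le_mul hW hωb (abs_nonneg _) hCW0
            linarith
    have h3 : (r₁ ^ 2 * μmin) * |deriv (deriv (ω j)) r| ≤ CA * |deriv (ω j) r| + CW * B' :=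
      le_trans (mul_le_mul_of_nonneg_right hrμ (abs_nonneg _)) habs2
    have h4 : |deriv (deriv (ω j)) r| ≤ (CA * |deriv (ω j) r| + CW * B') / (r₁ ^ 2 * μmin) := by
      rw [le_div_iff₀ hc]
      linarith
    refine h4.trans ?_
    rw [hKdef, hεdef]
    have h5 : 0 ≤ |deriv (ω j) r| := abs_nonneg _
    have h6 : (CA * |deriv (ω j) r| + CW * B') / (r₁ ^ 2 * μmin)
        = CA / (r₁ ^ 2 * μmin) * |deriv (ω j) r| + CW * B' / (r₁ ^ 2 * μmin) := by ring
    rw [h6]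
    have h7 : CA / (r₁ ^ 2 * μmin) ≤ (CA + 1) / (r₁ ^ 2 * μmin) := by gcongr; linarith
    have h8 := mul_le_mul_of_nonneg_right h7 h5
    linarith
  -- Grönwall bound on ω'
  obtain ⟨δ0, hδdef⟩ : ∃ x : ℝ,
      x = (Finset.Icc 1 (N - 1)).sup' hne (fun j => |deriv (ω j) r₁|) := ⟨_, rfl⟩
  have hδ0 : ∀ j ∈ Finset.Icc 1 (N - 1), |deriv (ω j) r₁| ≤ δ0 := fun j hj => by
    rw [hδdef]; exact Finset.le_sup' (fun j => |deriv (ω j) r₁|) hj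
  have hδ00 : 0 ≤ δ0 := le_trans (abs_nonneg _) (hδ0 1 h1mem)
  obtain ⟨D, hDdef⟩ : ∃ x : ℝ, x = gronwallBound δ0 K ε (r₂ - r₁) := ⟨_, rfl⟩
  have hgmono : ∀ x ∈ Set.Ico r₁ r₂, gronwallBound δ0 K ε (x - r₁) ≤ D := by
    intro x hx
    rw [hDdef, gronwallBound_of_K_ne_0 hK0.ne']
    beta_reduce
    have hexp : Real.exp (K * (x - r₁)) ≤ Real.exp (K * (r₂ - r₁)) := by
      rw [Real.exp_le_exp]
      have h1 : x - r₁ ≤ r₂ - r₁ := by linarith [hx.2]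
      nlinarith
    have h1 : 0 ≤ ε / K := div_nonneg hε0 hK0.le
    have h2 := mul_le_mul_of_nonneg_left hexp hδ00
    have h3 := mul_le_mul_of_nonneg_left (sub_le_sub_right hexp 1) h1
    linarith
  have hω'bd : ∀ j ∈ Finset.Icc 1 (N - 1), ∀ r ∈ Set.Ico r₁ r₂, |deriv (ω j) r| ≤ D := by
    intro j hj x hx
    have hIccsub : Set.Icc r₁ x ⊆ Set.Ico r₁ r₂ := fun y hy => ⟨hy.1, lt_of_le_of_lt hy.2 hx.2⟩
    have hIcosub : Set.Ico r₁ x ⊆ Set.Ico r₁ r₂ := fun y hy => ⟨hy.1, lt_trans hy.2 hx.2⟩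
    have hcont : ContinuousOn (deriv (ω j)) (Set.Icc r₁ x) := fun y hy =>
      ((hym y (hIccsub hy) j hj).2.1).continuousAt.continuousWithinAt
    have key := norm_le_gronwallBound_of_norm_deriv_right_le
      (f := deriv (ω j)) (f' := fun y => deriv (deriv (ω j)) y) (a := r₁) (b := x)
      (δ := δ0) (K := K) (ε := ε)
      hcont
      (fun y hy => ((hym y (hIcosub hy) j hj).2.1.hasDerivAt).hasDerivWithinAt)
      (by rw [Real.norm_eq_abs]; exact hδ0 j hj)
      (fun y hy => by
        rw [Real.norm_eq_abs, Real.norm_eq_abs]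
        exact hderiv2 j hj y (hIcosub hy))
      x (Set.right_mem_Icc.2 hx.1)
    rw [Real.norm_eq_abs] at key
    exact key.trans (hgmono x hx)
  have hD0 : 0 ≤ D := le_trans (abs_nonneg _) (hω'bd 1 h1mem r₁ hr₁I)
  obtain ⟨D2, hD2def⟩ : ∃ x : ℝ, x = K * D + ε := ⟨_, rfl⟩
  have hD20 : 0 ≤ D2 := by
    rw [hD2def]; exact add_nonneg (mul_nonneg hK0.le hD0) hε0
  have hω''bd : ∀ j ∈ Finset.Icc 1 (N - 1), ∀ r ∈ Set.Ico r₁ r₂,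
      |deriv (deriv (ω j)) r| ≤ D2 := by
    intro j hj r hr
    refine (hderiv2 j hj r hr).trans ?_
    rw [hD2def]
    have h1 := hω'bd j hj r hr
    nlinarith [hK0]
  -- limits of ω'
  have hω'lim : ∀ j ∈ Finset.Icc 1 (N - 1), ∃ b : ℝ, Tendsto (deriv (ω j)) (𝓝[<] r₂) (𝓝 b) := by
    intro j hj
    have hmonoF : MonotoneOn (fun r => deriv (ω j) r + D2 * r) (Set.Ico r₁ r₂) := by
      apply myMonoOnIco (g := fun r => deriv (deriv (ω j)) r + D2)
      · intro r hr
        exact ((hym r hr j hj).2.1.hasDerivAt).add (by simpa using (hasDerivAt_id r).const_mul D2)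
      · intro r hr
        have h1 := hω''bd j hj r hr
        have h2 := neg_abs_le (deriv (deriv (ω j)) r)
        linarith
    have hFub : ∀ r ∈ Set.Ico r₁ r₂, deriv (ω j) r + D2 * r ≤ D + D2 * r₂ := by
      intro r hr
      have h1 := hω'bd j hj r hr
      rw [abs_le] at h1
      have h2 : D2 * r ≤ D2 * r₂ := mul_le_mul_of_nonneg_left hr.2.le hD20
      linarith [h1.2]
    obtain ⟨L, hL⟩ := myTendstoMono hr₁₂ hmonoF hFub
    refine ⟨L - D2 * r₂, ?_⟩
    have hrl : Tendsto (fun r : ℝ => D2 * r) (𝓝[<] r₂) (𝓝 (D2 * r₂)) :=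
      (tendsto_id.const_mul _).mono_left nhdsWithin_le_nhds
    have h3 := hL.sub hrl
    apply h3.congr
    intro r
    ring
  -- bound on G and on S
  obtain ⟨CG, hCGdef⟩ : ∃ x : ℝ, x = ((N - 1 : ℕ) : ℝ) * D ^ 2 := ⟨_, rfl⟩
  have hCG0 : 0 ≤ CG := by
    rw [hCGdef]; exact mul_nonneg (Nat.cast_nonneg _) (sq_nonneg _)
  have hGbd : ∀ r ∈ Set.Ico r₁ r₂, GF N ω r ≤ CG := by
    intro r hr
    rw [hCGdef]
    unfold GF
    calc ∑ j ∈ Finset.Icc 1 (N - 1), deriv (ω j) r ^ 2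
        ≤ ∑ _j ∈ Finset.Icc 1 (N - 1), D ^ 2 :=
          Finset.sum_le_sum fun j hj => hsqle _ _ (hω'bd j hj r hr)
      _ = ((Finset.Icc 1 (N - 1)).card : ℝ) * D ^ 2 := by rw [Finset.sum_const, nsmul_eq_mul]
      _ = ((N - 1 : ℕ) : ℝ) * D ^ 2 := by rw [Nat.card_Icc]; norm_num
  obtain ⟨cS, hcSdef⟩ : ∃ x : ℝ, x = 2 * CG / r₁ := ⟨_, rfl⟩
  have hcS0 : 0 ≤ cS := by rw [hcSdef]; exact div_nonneg (by linarith) hr₁.le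
  have hSrate : ∀ r ∈ Set.Ico r₁ r₂, 2 * GF N ω r / r ≤ cS := by
    intro r hr
    rw [hcSdef]
    exact div_le_div₀ (by linarith) (by linarith [hGbd r hr]) hr₁ hr.1
  have hS'0 : ∀ r ∈ Set.Ico r₁ r₂, 0 ≤ S r * (2 * GF N ω r / r) := fun r hr =>
    mul_nonneg (hSpos r hr).le (div_nonneg (by linarith [hG0 r]) (hrpos r hr).le)
  have hSmono : MonotoneOn S (Set.Ico r₁ r₂) := myMonoOnIco hS' hS'0
  have hSanti : AntitoneOn (fun r => S r * Real.exp (-cS * r)) (Set.Ico r₁ r₂) := by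
    apply myAntiOnIco (g := fun r => S r * (2 * GF N ω r / r) * Real.exp (-cS * r)
      + S r * (Real.exp (-cS * r) * (-cS)))
    · intro r hr
      have h1 : HasDerivAt (fun x : ℝ => -cS * x) (-cS) r := by
        simpa using (hasDerivAt_id r).const_mul (-cS)
      have h2 := (Real.hasDerivAt_exp (-cS * r)).comp r h1
      exact (hS' r hr).mul h2
    · intro r hr
      have h1 := hSpos r hr
      have h2 := hSrate r hr
      have h3 := Real.exp_pos (-cS * r)
      have h4 := hS'0 r hr
      nlinarith [mul_pos h1 h3]
  obtain ⟨Smax, hSmaxdef⟩ : ∃ x : ℝ,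
      x = S r₁ * Real.exp (-cS * r₁) * Real.exp (cS * r₂) := ⟨_, rfl⟩
  have hSub : ∀ r ∈ Set.Ico r₁ r₂, S r ≤ Smax := by
    intro r hr
    have h1 := hSanti hr₁I hr hr.1
    have h2 : Real.exp (cS * r) ≤ Real.exp (cS * r₂) := by
      rw [Real.exp_le_exp]
      exact mul_le_mul_of_nonneg_left hr.2.le hcS0
    have h3 : (0:ℝ) < Real.exp (cS * r) := Real.exp_pos _
    have hS1pos : 0 < S r₁ * Real.exp (-cS * r₁) := mul_pos (hSpos r₁ hr₁I) (Real.exp_pos _)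
    have key : S r = S r * Real.exp (-cS * r) * Real.exp (cS * r) := by
      rw [mul_assoc, ← Real.exp_add]
      have h0 : -cS * r + cS * r = 0 := by ring
      rw [h0, Real.exp_zero, mul_one]
    rw [hSmaxdef, key]
    calc S r * Real.exp (-cS * r) * Real.exp (cS * r)
        ≤ S r₁ * Real.exp (-cS * r₁) * Real.exp (cS * r) := mul_le_mul_of_nonneg_right h1 h3.le
      _ ≤ S r₁ * Real.exp (-cS * r₁) * Real.exp (cS * r₂) :=
          mul_le_mul_of_nonneg_left h2 hS1pos.le
  obtain ⟨S₂, hS₂⟩ : ∃ L, Tendsto S (𝓝[<] r₂) (𝓝 L) := myTendstoMono hr₁₂ hSmono hSub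
  have hS₂pos : 0 < S₂ := by
    have hev : ∀ᶠ r in 𝓝[<] r₂, S r₁ ≤ S r := by
      filter_upwards [Ioo_mem_nhdsLT hr₁₂] with r hr
      exact hSmono hr₁I ⟨hr.1.le, hr.2⟩ hr.1.le
    exact lt_of_lt_of_le (hSpos r₁ hr₁I) (ge_of_tendsto hS₂ hev)
  -- assemble the conclusion
  have hbd : ∀ (f : ℝ → ℝ) (C : ℝ), (∀ r ∈ Set.Ico r₁ r₂, |f r| ≤ C) →
      Bornology.IsBounded (f '' Set.Ico r₁ r₂) := by
    intro f C hC
    apply (Metric.isBounded_Icc (-C) C).subset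
    rintro _ ⟨r, hr, rfl⟩
    exact abs_le.mp (hC r hr)
  refine ⟨hbd m Ma hmabs, hbd S Smax ?_, fun j hj => ⟨hbd _ B (hB j hj), hbd _ D (hω'bd j hj)⟩,
    ⟨m₂, hm₂⟩, ⟨S₂, hS₂pos, hS₂⟩, fun j hj => ⟨hωlim j hj, hω'lim j hj⟩⟩
  intro r hr
  rw [abs_of_pos (hSpos r hr)]
  exact hSub r hr
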